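/- arXiv:2008.01264 — 2 statements merged into one kernel-verified Lean document; each statement's English description precedes it below -/
import Mathlib

section
/- Let C ⊂ ℝ^k be compact convex, 0 ∈ ∂C, E a linear subspace with C ∩ E = {0}, P the orthogonal projection onto E. For any x ∈ C \ {0} with Px ≠ 0, there exists a ∈ [0,1) such that the point y = (1−a)x + a·Px lies on the boundary ∂C, satisfies Py = Px, ‖(I−P)y‖₂ ≤ ‖(I−P)x‖₂, and ‖x‖₂/‖(I−P)x‖₂ ≤ ‖y‖₂/‖(I−P)y‖₂. Consequently, sup over C\{0} of ‖x‖₂/‖(I−P)x‖₂ is finite iff the sup over ∂C\{0} is finite. -/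
open Set Filter Topology RealInnerProductSpace

private lemma seg_hits_frontier {X : Type*} [NormedAddCommGroup X] [NormedSpace ℝ X]
    {C : Set X} (hC : IsClosed C) {x z : X} (hx : x ∈ C) (hz : z ∉ C) :
    ∃ a ∈ Ico (0:ℝ) 1, (1-a) • x + a • z ∈ frontier C := by
  set f : ℝ → X := fun a => (1-a) • x + a • z with hf
  have hfc : Continuous f := by fun_prop
  set A : Set ℝ := Icc (0:ℝ) 1 ∩ f ⁻¹' C with hA
  have hA0 : (0:ℝ) ∈ A := by
    refine ⟨⟨le_refl _, zero_le_one⟩, ?_⟩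
    simp [hf, hx]
  have hAbdd : BddAbove A := (BddAbove.mono (inter_subset_left) (bddAbove_Icc))
  have hAcl : IsClosed A := isClosed_Icc.inter (hC.preimage hfc)
  have hmem : sSup A ∈ A := hAcl.csSup_mem ⟨0, hA0⟩ hAbdd
  set a := sSup A with ha
  have ha1 : a ≠ 1 := by
    intro h
    have h2 := hmem.2
    rw [mem_preimage, h] at h2
    simp [hf] at h2
    exact hz h2
  have haIco : a ∈ Ico (0:ℝ) 1 := ⟨hmem.1.1, lt_of_le_of_ne hmem.1.2 ha1⟩
  refine ⟨a, haIco, ?_⟩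
  rw [frontier_eq_closure_inter_closure]
  refine ⟨subset_closure hmem.2, ?_⟩
  have h1a : (0:ℝ) < 1 - a := by linarith [haIco.2]
  have hseq : Filter.Tendsto (fun n : ℕ => f (a + (1-a) * (1 / (n+1)))) Filter.atTop (𝓝 (f a)) := by
    apply (hfc.tendsto (a)).comp
    have : Filter.Tendsto (fun n : ℕ => a + (1-a) * (1 / (n+1))) Filter.atTop (𝓝 (a + (1-a) * 0)) :=
      tendsto_const_nhds.add (tendsto_const_nhds.mul tendsto_one_div_add_atTop_nhds_zero_nat)
    simpa using this
  apply mem_closure_of_tendsto hseq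
  filter_upwards with n
  intro hmemC
  have hfrac : 0 < (1:ℝ) / (n+1) := by positivity
  have hfrac1 : (1:ℝ) / (n+1) ≤ 1 := by
    rw [div_le_one (by positivity)]; linarith [Nat.cast_nonneg (α := ℝ) n]
  have hb : a + (1-a) * (1 / (n+1)) ∈ A := by
    refine ⟨⟨by nlinarith [hmem.1.1], by nlinarith⟩, hmemC⟩
  have hle : a + (1-a) * (1 / (n+1)) ≤ a := le_csSup hAbdd hb
  nlinarith

private lemma pyth {k : ℕ} (E : Submodule ℝ (EuclideanSpace ℝ (Fin k)))
    (v : EuclideanSpace ℝ (Fin k)) :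
    ‖v‖^2 = ‖(Submodule.orthogonalProjectionOnto E v : EuclideanSpace ℝ (Fin k))‖^2 +
      ‖v - (Submodule.orthogonalProjectionOnto E v : EuclideanSpace ℝ (Fin k))‖^2 := by
  have h2 : (inner (𝕜 := ℝ) ((Submodule.orthogonalProjectionOnto E v : EuclideanSpace ℝ (Fin k)))
      (v - (Submodule.orthogonalProjectionOnto E v : EuclideanSpace ℝ (Fin k)))) = (0:ℝ) :=
    Submodule.inner_right_of_mem_orthogonal (Submodule.orthogonalProjectionOnto E v).2
      (E.sub_starProjection_mem_orthogonal v)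
  calc ‖v‖^2 = ‖(Submodule.orthogonalProjectionOnto E v : EuclideanSpace ℝ (Fin k)) +
      (v - (Submodule.orthogonalProjectionOnto E v : EuclideanSpace ℝ (Fin k)))‖^2 := by
        rw [add_sub_cancel]
    _ = _ := by rw [norm_add_sq_real, h2]; ring

set_option maxHeartbeats 1000000 in
/-- Let `C ⊂ ℝ^k` be compact convex with `0 ∈ ∂C`, `E` a linear subspace with
`C ∩ E = {0}`, and `P` the orthogonal projection onto `E`.  For every `x ∈ C \ {0}` with
`Px ≠ 0` there is `a ∈ [0,1)` such that `y = (1−a)x + a·Px` lies on `∂C`, `Py = Px`,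
`‖(I−P)y‖ ≤ ‖(I−P)x‖`, and `‖x‖/‖(I−P)x‖ ≤ ‖y‖/‖(I−P)y‖` (stated in cross-multiplied form).
Consequently the supremum of `‖x‖/‖(I−P)x‖` over `C \ {0}` is finite iff the supremum over
`∂C \ {0}` is finite. -/
theorem stmt12 {k : ℕ} (C : Set (EuclideanSpace ℝ (Fin k)))
    (hCcp : IsCompact C) (hCcv : Convex ℝ C) (h0 : (0 : EuclideanSpace ℝ (Fin k)) ∈ frontier C)
    (E : Submodule ℝ (EuclideanSpace ℝ (Fin k)))
    (hCE : C ∩ (E : Set (EuclideanSpace ℝ (Fin k))) = {0}) :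
    (∀ x ∈ C \ ({0} : Set (EuclideanSpace ℝ (Fin k))),
        (Submodule.orthogonalProjectionOnto E x : EuclideanSpace ℝ (Fin k)) ≠ 0 →
        ∃ a ∈ Ico (0 : ℝ) 1,
          (1 - a) • x + a • (Submodule.orthogonalProjectionOnto E x : EuclideanSpace ℝ (Fin k)) ∈ frontier C ∧
          (Submodule.orthogonalProjectionOnto E
              ((1 - a) • x + a • (Submodule.orthogonalProjectionOnto E x : EuclideanSpace ℝ (Fin k))) :
              EuclideanSpace ℝ (Fin k)) =
            (Submodule.orthogonalProjectionOnto E x : EuclideanSpace ℝ (Fin k)) ∧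
          ‖((1 - a) • x + a • (Submodule.orthogonalProjectionOnto E x : EuclideanSpace ℝ (Fin k))) -
              (Submodule.orthogonalProjectionOnto E
                ((1 - a) • x + a • (Submodule.orthogonalProjectionOnto E x : EuclideanSpace ℝ (Fin k))) :
                EuclideanSpace ℝ (Fin k))‖ ≤
            ‖x - (Submodule.orthogonalProjectionOnto E x : EuclideanSpace ℝ (Fin k))‖ ∧
          ‖x‖ * ‖((1 - a) • x + a • (Submodule.orthogonalProjectionOnto E x : EuclideanSpace ℝ (Fin k))) -
              (Submodule.orthogonalProjectionOnto E
                ((1 - a) • x + a • (Submodule.orthogonalProjectionOnto E x : EuclideanSpace ℝ (Fin k))) :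
                EuclideanSpace ℝ (Fin k))‖ ≤
            ‖(1 - a) • x + a • (Submodule.orthogonalProjectionOnto E x : EuclideanSpace ℝ (Fin k))‖ *
              ‖x - (Submodule.orthogonalProjectionOnto E x : EuclideanSpace ℝ (Fin k))‖) ∧
    ((∃ M : ℝ, ∀ x ∈ C \ ({0} : Set (EuclideanSpace ℝ (Fin k))),
        ‖x‖ ≤ M * ‖x - (Submodule.orthogonalProjectionOnto E x : EuclideanSpace ℝ (Fin k))‖) ↔
      (∃ M : ℝ, ∀ x ∈ frontier C \ ({0} : Set (EuclideanSpace ℝ (Fin k))),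
        ‖x‖ ≤ M * ‖x - (Submodule.orthogonalProjectionOnto E x : EuclideanSpace ℝ (Fin k))‖)) := by
  have hCcl : IsClosed C := hCcp.isClosed
  -- Part 1
  have part1 : ∀ x ∈ C \ ({0} : Set (EuclideanSpace ℝ (Fin k))),
      (Submodule.orthogonalProjectionOnto E x : EuclideanSpace ℝ (Fin k)) ≠ 0 →
      ∃ a ∈ Ico (0 : ℝ) 1,
        (1 - a) • x + a • (Submodule.orthogonalProjectionOnto E x : EuclideanSpace ℝ (Fin k)) ∈ frontier C ∧
        (Submodule.orthogonalProjectionOnto E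
            ((1 - a) • x + a • (Submodule.orthogonalProjectionOnto E x : EuclideanSpace ℝ (Fin k))) :
            EuclideanSpace ℝ (Fin k)) =
          (Submodule.orthogonalProjectionOnto E x : EuclideanSpace ℝ (Fin k)) ∧
        ‖((1 - a) • x + a • (Submodule.orthogonalProjectionOnto E x : EuclideanSpace ℝ (Fin k))) -
            (Submodule.orthogonalProjectionOnto E
              ((1 - a) • x + a • (Submodule.orthogonalProjectionOnto E x : EuclideanSpace ℝ (Fin k))) :
              EuclideanSpace ℝ (Fin k))‖ ≤
          ‖x - (Submodule.orthogonalProjectionOnto E x : EuclideanSpace ℝ (Fin k))‖ ∧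
        ‖x‖ * ‖((1 - a) • x + a • (Submodule.orthogonalProjectionOnto E x : EuclideanSpace ℝ (Fin k))) -
            (Submodule.orthogonalProjectionOnto E
              ((1 - a) • x + a • (Submodule.orthogonalProjectionOnto E x : EuclideanSpace ℝ (Fin k))) :
              EuclideanSpace ℝ (Fin k))‖ ≤
          ‖(1 - a) • x + a • (Submodule.orthogonalProjectionOnto E x : EuclideanSpace ℝ (Fin k))‖ *
            ‖x - (Submodule.orthogonalProjectionOnto E x : EuclideanSpace ℝ (Fin k))‖ := by
    rintro x ⟨hxC, hx0⟩ hPx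
    simp only [mem_singleton_iff] at hx0
    set px : EuclideanSpace ℝ (Fin k) := (Submodule.orthogonalProjectionOnto E x : EuclideanSpace ℝ (Fin k))
      with hpx
    have hpxE : px ∈ E := (Submodule.orthogonalProjectionOnto E x).2
    have hpxC : px ∉ C := by
      intro hc
      have : px ∈ C ∩ (E : Set (EuclideanSpace ℝ (Fin k))) := ⟨hc, hpxE⟩
      rw [hCE] at this
      exact hPx this
    obtain ⟨a, haIco, hafr⟩ := seg_hits_frontier hCcl hxC hpxC
    refine ⟨a, haIco, hafr, ?_⟩
    set y : EuclideanSpace ℝ (Fin k) := (1 - a) • x + a • px with hy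
    -- Py = Px
    have hPy : (Submodule.orthogonalProjectionOnto E y : EuclideanSpace ℝ (Fin k)) = px := by
      have hpp : (Submodule.orthogonalProjectionOnto E px : EuclideanSpace ℝ (Fin k)) = px :=
        Submodule.starProjection_eq_self_iff.2 hpxE
      have : (Submodule.orthogonalProjectionOnto E y : EuclideanSpace ℝ (Fin k)) =
          (1 - a) • (Submodule.orthogonalProjectionOnto E x : EuclideanSpace ℝ (Fin k)) +
          a • (Submodule.orthogonalProjectionOnto E px : EuclideanSpace ℝ (Fin k)) := by
        simp [hy, map_add, map_smul]
      rw [this, hpp, ← hpx, ← add_smul]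
      norm_num
    refine ⟨hPy, ?_, ?_⟩
    · -- norm of (I-P)y
      have hyp : y - (Submodule.orthogonalProjectionOnto E y : EuclideanSpace ℝ (Fin k)) =
          (1 - a) • (x - px) := by
        rw [hPy, hy, smul_sub, sub_smul, sub_smul, one_smul, one_smul]
        abel
      rw [hyp, norm_smul]
      have : ‖(1 - a : ℝ)‖ ≤ 1 := by
        rw [Real.norm_eq_abs, abs_le]; constructor <;> [linarith [haIco.2]; linarith [haIco.1]]
      nlinarith [norm_nonneg (x - px)]
    · -- cross-multiplied inequality
      have hyp : y - (Submodule.orthogonalProjectionOnto E y : EuclideanSpace ℝ (Fin k)) =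
          (1 - a) • (x - px) := by
        rw [hPy, hy, smul_sub, sub_smul, sub_smul, one_smul, one_smul]
        abel
      have h1a0 : (0:ℝ) ≤ 1 - a := by linarith [haIco.2]
      have hnyp : ‖y - (Submodule.orthogonalProjectionOnto E y : EuclideanSpace ℝ (Fin k))‖ =
          (1 - a) * ‖x - px‖ := by
        rw [hyp, norm_smul, Real.norm_eq_abs, abs_of_nonneg h1a0]
      -- (1-a) * ‖x‖ ≤ ‖y‖
      have key : (1 - a) * ‖x‖ ≤ ‖y‖ := by
        have hx2 := pyth E x
        have hy2 := pyth E y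
        rw [hnyp] at hy2
        rw [hPy] at hy2
        rw [← hpx] at hx2
        have h1a1 : (1 - a) ≤ 1 := by linarith [haIco.1]
        have h2a : (0:ℝ) ≤ 2 - a := by linarith [haIco.2]
        have hsq : (1 - a)^2 * ‖px‖^2 ≤ ‖px‖^2 := by
          nlinarith [mul_nonneg (mul_nonneg haIco.1 h2a) (sq_nonneg ‖px‖)]
        have key2 : ((1 - a) * ‖x‖)^2 ≤ ‖y‖^2 := by
          have e1 : ((1 - a) * ‖x‖)^2 = (1 - a)^2 * ‖px‖^2 + (1 - a)^2 * ‖x - px‖^2 := by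
            rw [mul_pow, hx2]; ring
          have e2 : ‖y‖^2 = ‖px‖^2 + (1 - a)^2 * ‖x - px‖^2 := by rw [hy2]; ring
          linarith [hsq, e1, e2]
        exact (pow_le_pow_iff_left₀ (mul_nonneg h1a0 (norm_nonneg x))
          (norm_nonneg y) two_ne_zero).mp key2
      calc ‖x‖ * ‖y - (Submodule.orthogonalProjectionOnto E y : EuclideanSpace ℝ (Fin k))‖
          = ((1 - a) * ‖x‖) * ‖x - px‖ := by rw [hnyp]; ring
        _ ≤ ‖y‖ * ‖x - px‖ := by
            apply mul_le_mul_of_nonneg_right key (norm_nonneg _)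
  refine ⟨part1, ?_⟩
  constructor
  · rintro ⟨M, hM⟩
    refine ⟨M, fun x hx => hM x ⟨?_, hx.2⟩⟩
    have := hx.1
    rw [frontier_eq_closure_inter_closure, hCcl.closure_eq] at this
    exact this.1
  · rintro ⟨M, hM⟩
    refine ⟨max M 1, fun x hx => ?_⟩
    obtain ⟨hxC, hx0⟩ := hx
    simp only [mem_singleton_iff] at hx0
    by_cases hPx : (Submodule.orthogonalProjectionOnto E x : EuclideanSpace ℝ (Fin k)) = 0
    · rw [hPx, sub_zero]
      nlinarith [norm_nonneg x, le_max_right M 1]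
    · obtain ⟨a, haIco, hfr, hPy, hle, hcross⟩ :=
        part1 x ⟨hxC, by simpa using hx0⟩ hPx
      set px : EuclideanSpace ℝ (Fin k) := (Submodule.orthogonalProjectionOnto E x : EuclideanSpace ℝ (Fin k))
        with hpx
      set y : EuclideanSpace ℝ (Fin k) := (1 - a) • x + a • px with hy
      have hy0 : y ≠ 0 := by
        intro h
        apply hPx
        rw [← hPy, h]
        simp
      have hybd : ‖y‖ ≤ M * ‖y - (Submodule.orthogonalProjectionOnto E y : EuclideanSpace ℝ (Fin k))‖ :=
        hM y ⟨hfr, by simpa using hy0⟩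
      have hxpx : x - px ≠ 0 := by
        intro h
        have hxE : x ∈ E := by
          have hx' : x = px := by rwa [sub_eq_zero] at h
          rw [hx', hpx]; exact (Submodule.orthogonalProjectionOnto E x).2
        have : x ∈ C ∩ (E : Set (EuclideanSpace ℝ (Fin k))) := ⟨hxC, hxE⟩
        rw [hCE] at this
        exact hx0 this
      have hyp : y - (Submodule.orthogonalProjectionOnto E y : EuclideanSpace ℝ (Fin k)) =
          (1 - a) • (x - px) := by
        rw [hPy, hy, smul_sub, sub_smul, sub_smul, one_smul, one_smul]
        abel
      have hnyp : 0 < ‖y - (Submodule.orthogonalProjectionOnto E y : EuclideanSpace ℝ (Fin k))‖ := by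
        rw [hyp, norm_smul]
        have h1 : (0:ℝ) < 1 - a := by linarith [haIco.2]
        have h2 : 0 < ‖x - px‖ := norm_pos_iff.2 hxpx
        rw [Real.norm_eq_abs, abs_of_pos h1]
        positivity
      have hchain : ‖x‖ * ‖y - (Submodule.orthogonalProjectionOnto E y : EuclideanSpace ℝ (Fin k))‖ ≤
          (M * ‖y - (Submodule.orthogonalProjectionOnto E y : EuclideanSpace ℝ (Fin k))‖) * ‖x - px‖ :=
        le_trans hcross (mul_le_mul_of_nonneg_right hybd (norm_nonneg _))
      have hMx : ‖x‖ ≤ M * ‖x - px‖ := by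
        rw [← mul_le_mul_iff_of_pos_right hnyp]
        nlinarith
      calc ‖x‖ ≤ M * ‖x - px‖ := hMx
        _ ≤ max M 1 * ‖x - px‖ :=
          mul_le_mul_of_nonneg_right (le_max_left M 1) (norm_nonneg _)
end

section
/- Let p and q be probability distributions on a finite set 𝒴 and let {|e(y)⟩}_{y∈𝒴} and {|f(y)⟩}_{y∈𝒴} be two orthonormal bases of a finite-dimensional Hilbert space. Define ρ = Σ_y p(y)|e(y)⟩⟨e(y)| and σ = Σ_y q(y)|f(y)⟩⟨f(y)|. Then 1 − (1/2)‖ρ − σ‖₁ ≥ (1/2)·Σ_{y,y'} min(p(y), q(y'))·|⟨e(y)|f(y')⟩|². -/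
open ComplexOrder Matrix

noncomputable def traceNorm {m : Type*} [Fintype m] [DecidableEq m]
    (X : Matrix m m ℂ) : ℝ :=
  (((Matrix.posSemidef_conjTranspose_mul_self X).1.eigenvectorUnitary : Matrix m m ℂ) *
    diagonal ((fun x => ((Real.sqrt x : ℝ) : ℂ)) ∘
      (Matrix.posSemidef_conjTranspose_mul_self X).1.eigenvalues) *
    (star ((Matrix.posSemidef_conjTranspose_mul_self X).1.eigenvectorUnitary : Matrix m m ℂ))).trace.re

lemma traceNorm_herm {m : Type*} [Fintype m] [DecidableEq m]
    {X : Matrix m m ℂ} (hX : X.IsHermitian) :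
    traceNorm X = ∑ i, |hX.eigenvalues i| := by
  set U : Matrix m m ℂ := (hX.eigenvectorUnitary : Matrix m m ℂ) with hU
  set D : Matrix m m ℂ := Matrix.diagonal (fun i => Complex.ofReal |hX.eigenvalues i|) with hD
  set Dl : Matrix m m ℂ := Matrix.diagonal (RCLike.ofReal ∘ hX.eigenvalues) with hDl
  have hUU : star U * U = 1 := mem_unitaryGroup_iff'.mp hX.eigenvectorUnitary.2
  have hDpsd : D.PosSemidef := by
    refine Matrix.posSemidef_diagonal_iff.mpr fun i => ?_
    exact Complex.zero_le_real.mpr (abs_nonneg _)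
  have hM : (U * D * star U).PosSemidef := by
    have := hDpsd.mul_mul_conjTranspose_same U
    rwa [Matrix.star_eq_conjTranspose]
  have hDD : D * D = Dl * Dl := by
    rw [hD, hDl, Matrix.diagonal_mul_diagonal, Matrix.diagonal_mul_diagonal]
    rw [show (RCLike.ofReal : ℝ → ℂ) = Complex.ofReal from rfl]
    funext i
    simp only [Function.comp_apply, ← Complex.ofReal_mul, abs_mul_abs_self]
  have expand : ∀ (E : Matrix m m ℂ), (U * E * star U) * (U * E * star U) = U * (E * E) * star U := by
    intro E
    calc (U * E * star U) * (U * E * star U) = U * (E * (star U * U) * E) * star U := by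
          noncomm_ring
      _ = U * (E * E) * star U := by rw [hUU, Matrix.mul_one]
  have hM2 : (U * D * star U) ^ 2 = Xᴴ * X := by
    rw [hX.eq, pow_two, expand, hDD]
    conv_rhs => rw [hX.spectral_theorem]
    simp only [Unitary.conjStarAlgAut_apply, Unitary.coe_star]
    rw [← hU, ← hDl, expand]
  have hsqrt : U * D * star U =
      ((Matrix.posSemidef_conjTranspose_mul_self X).1.eigenvectorUnitary : Matrix m m ℂ) *
      diagonal ((fun x => ((Real.sqrt x : ℝ) : ℂ)) ∘
        (Matrix.posSemidef_conjTranspose_mul_self X).1.eigenvalues) *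
      (star ((Matrix.posSemidef_conjTranspose_mul_self X).1.eigenvectorUnitary : Matrix m m ℂ)) := by
    open MatrixOrder in
    have h1 := (Matrix.posSemidef_conjTranspose_mul_self X).1.cfc_eq Real.sqrt
    rw [Matrix.IsHermitian.cfc, Unitary.conjStarAlgAut_apply] at h1
    refine Eq.trans ?_ h1
    rw [← cfcₙ_eq_cfc, ← CFC.sqrt_eq_real_sqrt _ (Matrix.posSemidef_conjTranspose_mul_self X).nonneg]
    exact (CFC.sqrt_unique (by rw [← pow_two]; exact hM2) hM.nonneg).symm
  have htr : (U * D * star U).trace = ∑ i, Complex.ofReal |hX.eigenvalues i| := by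
    rw [Matrix.trace_mul_comm, ← Matrix.mul_assoc, hUU, Matrix.one_mul, hD,
      Matrix.trace_diagonal]
  rw [traceNorm, ← hsqrt, htr]
  simp

lemma dot_aux {𝒴 : Type*} [Fintype 𝒴] (r : 𝒴 → ℝ) (g : 𝒴 → EuclideanSpace ℂ 𝒴) (x : 𝒴 → ℂ) :
    star x ⬝ᵥ ((∑ y, (r y : ℂ) • Matrix.of (fun i j => g y i * star (g y j))) *ᵥ x)
      = ∑ y, (r y : ℂ) * (star (∑ k, star (g y k) * x k) * (∑ k, star (g y k) * x k)) := by
  have expand : ∀ (M : Matrix 𝒴 𝒴 ℂ), star x ⬝ᵥ (M *ᵥ x) = ∑ j, ∑ k, star (x j) * M j k * x k := by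
    intro M
    simp only [dotProduct, mulVec, Pi.star_apply, Finset.mul_sum]
    exact Finset.sum_congr rfl fun j _ => Finset.sum_congr rfl fun k _ => by ring
  rw [expand]
  have h1 : ∀ j k, star (x j) * (∑ y, (r y : ℂ) • Matrix.of (fun i j => g y i * star (g y j))) j k * x k
      = ∑ y, (r y : ℂ) * (g y j * star (x j)) * (star (g y k) * x k) := by
    intro j k
    simp only [Matrix.sum_apply, Matrix.smul_apply, Matrix.of_apply, smul_eq_mul,
      Finset.sum_mul, Finset.mul_sum]
    exact Finset.sum_congr rfl fun y _ => by ring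
  simp_rw [h1]
  have h2 : ∀ (j : 𝒴), ∑ k, ∑ y, (r y : ℂ) * (g y j * star (x j)) * (star (g y k) * x k)
      = ∑ y, ∑ k, (r y : ℂ) * (g y j * star (x j)) * (star (g y k) * x k) := fun j =>
    Finset.sum_comm
  simp_rw [h2]
  rw [Finset.sum_comm]
  refine Finset.sum_congr rfl fun y _ => ?_
  simp only [star_sum, star_mul', star_star]
  rw [Finset.sum_mul_sum, Finset.mul_sum]
  refine Finset.sum_congr rfl fun j _ => ?_
  rw [Finset.mul_sum]
  exact Finset.sum_congr rfl fun k _ => by ring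

lemma re_sum_aux {𝒴 : Type*} [Fintype 𝒴] (r : 𝒴 → ℝ) (c : 𝒴 → ℂ) :
    (∑ y, (r y : ℂ) * (star (c y) * c y)).re = ∑ y, r y * ‖c y‖ ^ 2 := by
  rw [Complex.re_sum]
  refine Finset.sum_congr rfl fun y _ => ?_
  have h : star (c y) * c y = ((‖c y‖ ^ 2 : ℝ) : ℂ) := by
    rw [Complex.star_def, mul_comm, Complex.mul_conj, Complex.normSq_eq_norm_sq]
  rw [h, ← Complex.ofReal_mul, Complex.ofReal_re]

/-- Nussbaum–Szkoła bound. Let `p, q` be probability distributions on a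
finite set `𝒴` and `{|e(y)⟩}`, `{|f(y)⟩}` two orthonormal bases of a finite-dimensional Hilbert
space.  With `ρ = Σ_y p(y)|e(y)⟩⟨e(y)|` and `σ = Σ_y q(y)|f(y)⟩⟨f(y)|`,
`1 − (1/2)‖ρ − σ‖₁ ≥ (1/2) Σ_{y,y'} min(p(y), q(y')) |⟨e(y)|f(y')⟩|²`. -/
theorem stmt15 {𝒴 : Type*} [Fintype 𝒴] [DecidableEq 𝒴]
    (p q : 𝒴 → ℝ) (hp : ∀ y, 0 ≤ p y) (hp1 : ∑ y, p y = 1)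
    (hq : ∀ y, 0 ≤ q y) (hq1 : ∑ y, q y = 1)
    (e f : 𝒴 → EuclideanSpace ℂ 𝒴) (he : Orthonormal ℂ e) (hf : Orthonormal ℂ f)
    (ρ σ : Matrix 𝒴 𝒴 ℂ)
    (hρ : ρ = ∑ y, (p y : ℂ) • Matrix.of (fun i j => e y i * star (e y j)))
    (hσ : σ = ∑ y, (q y : ℂ) • Matrix.of (fun i j => f y i * star (f y j))) :
    (1 / 2) * ∑ y, ∑ y', min (p y) (q y') *
        ‖(inner (𝕜 := ℂ) (e y) (f y') : ℂ)‖ ^ 2 ≤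
      1 - traceNorm (ρ - σ) / 2 := by
  classical
  -- Hermiticity
  have hherm : ∀ (r : 𝒴 → ℝ) (g : 𝒴 → EuclideanSpace ℂ 𝒴),
      (∑ y, (r y : ℂ) • Matrix.of (fun i j => g y i * star (g y j))).IsHermitian := by
    intro r g
    show Matrix.conjTranspose _ = _
    ext i j
    simp only [Matrix.conjTranspose_apply, Matrix.sum_apply, Matrix.smul_apply, Matrix.of_apply,
      smul_eq_mul, star_sum, star_mul', star_star]
    refine Finset.sum_congr rfl fun y _ => ?_
    simp only [Complex.star_def, Complex.conj_ofReal]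
    ring
  have hΔ : (ρ - σ).IsHermitian := by
    rw [hρ, hσ]; exact (hherm p e).sub (hherm q f)
  set v : OrthonormalBasis 𝒴 ℂ (EuclideanSpace ℂ 𝒴) := hΔ.eigenvectorBasis with hv
  set lam : 𝒴 → ℝ := hΔ.eigenvalues with hlam
  set a : 𝒴 → 𝒴 → ℂ := fun y i => inner (𝕜 := ℂ) (e y) (v i) with ha
  set b : 𝒴 → 𝒴 → ℂ := fun y i => inner (𝕜 := ℂ) (v i) (f y) with hb
  set P : 𝒴 → ℝ := fun i => ∑ y, p y * ‖a y i‖ ^ 2 with hP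
  set Q : 𝒴 → ℝ := fun i => ∑ y, q y * ‖b y i‖ ^ 2 with hQ
  -- the eigenvalue identity
  have hdotρ : ∀ x : 𝒴 → ℂ, star x ⬝ᵥ (ρ *ᵥ x)
      = ∑ y, (p y : ℂ) * (star (∑ k, star (e y k) * x k) * (∑ k, star (e y k) * x k)) := by
    intro x
    rw [hρ]
    exact dot_aux p e x
  have hdotσ : ∀ x : 𝒴 → ℂ, star x ⬝ᵥ (σ *ᵥ x)
      = ∑ y, (q y : ℂ) * (star (∑ k, star (f y k) * x k) * (∑ k, star (f y k) * x k)) := by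
    intro x
    rw [hσ]
    exact dot_aux q f x
  have key : ∀ i, lam i = P i - Q i := by
    intro i
    have h0 := hΔ.eigenvalues_eq i
    rw [Matrix.sub_mulVec, dotProduct_sub, hdotρ, hdotσ, map_sub,
      RCLike.re_to_complex, RCLike.re_to_complex, re_sum_aux, re_sum_aux] at h0
    simp only [Complex.star_def, ← hv] at h0
    have hE : ∀ y, ‖∑ x, (starRingEnd ℂ) (e y x) * v i x‖ = ‖a y i‖ := by
      intro y
      simp only [ha, PiLp.inner_apply, RCLike.inner_apply]
      congr 1
      exact Finset.sum_congr rfl fun k _ => by ring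
    have hF : ∀ y, ‖∑ x, (starRingEnd ℂ) (f y x) * v i x‖ = ‖b y i‖ := by
      intro y
      rw [← RCLike.norm_conj (b y i)]
      congr 1
      simp only [hb, PiLp.inner_apply, RCLike.inner_apply, map_sum, _root_.map_mul, Complex.conj_conj]
    rw [hlam, h0, hP, hQ]
    simp only [hE, hF]
  -- Parseval
  have hcast : ∀ (t : 𝒴 → ℝ) (s : ℝ), (∑ i, (t i : ℂ)) = (s : ℂ) → ∑ i, t i = s := by
    intro t s h
    exact_mod_cast h
  have hPar_e : ∀ y, ∑ i, ‖a y i‖ ^ 2 = 1 := by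
    intro y
    refine hcast _ _ ?_
    have h := v.sum_inner_mul_inner (e y) (e y)
    rw [inner_self_eq_norm_sq_to_K, he.1 y] at h
    norm_num at h
    rw [Complex.ofReal_one, ← h]
    refine Finset.sum_congr rfl fun i _ => ?_
    have h1 : (∑ x, (starRingEnd ℂ) (e y x) * v i x) = a y i := by
      simp only [ha, PiLp.inner_apply, RCLike.inner_apply]
      exact Finset.sum_congr rfl fun k _ => by ring
    have h2 : (∑ x, (starRingEnd ℂ) (v i x) * e y x) = (starRingEnd ℂ) (a y i) := by
      simp only [ha, PiLp.inner_apply, RCLike.inner_apply, map_sum, _root_.map_mul, Complex.conj_conj]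
    rw [← inner_conj_symm (v i) (e y), Complex.mul_conj, Complex.normSq_eq_norm_sq]
  have hPar_f : ∀ y, ∑ i, ‖b y i‖ ^ 2 = 1 := by
    intro y
    refine hcast _ _ ?_
    have h := v.sum_inner_mul_inner (f y) (f y)
    rw [inner_self_eq_norm_sq_to_K, hf.1 y] at h
    norm_num at h
    rw [Complex.ofReal_one, ← h]
    refine Finset.sum_congr rfl fun i _ => ?_
    have h1 : (∑ x, (starRingEnd ℂ) (f y x) * v i x) = (starRingEnd ℂ) (b y i) := by
      simp only [hb, PiLp.inner_apply, RCLike.inner_apply, map_sum, _root_.map_mul, Complex.conj_conj]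
    have h2 : (∑ x, (starRingEnd ℂ) (v i x) * f y x) = b y i := by
      simp only [hb, PiLp.inner_apply, RCLike.inner_apply]
      exact Finset.sum_congr rfl fun k _ => by ring
    rw [← inner_conj_symm (f y) (v i), mul_comm, Complex.mul_conj, Complex.normSq_eq_norm_sq]
  have hsumP : ∑ i, P i = 1 := by
    have h : ∑ i, P i = ∑ y, p y * ∑ i, ‖a y i‖ ^ 2 := by
      simp_rw [hP]
      rw [Finset.sum_comm]
      exact Finset.sum_congr rfl fun y _ => (Finset.mul_sum _ _ _).symm
    rw [h]
    simp only [hPar_e, mul_one]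
    exact hp1
  have hsumQ : ∑ i, Q i = 1 := by
    have h : ∑ i, Q i = ∑ y, q y * ∑ i, ‖b y i‖ ^ 2 := by
      simp_rw [hQ]
      rw [Finset.sum_comm]
      exact Finset.sum_congr rfl fun y _ => (Finset.mul_sum _ _ _).symm
    rw [h]
    simp only [hPar_f, mul_one]
    exact hq1
  set S : Finset 𝒴 := Finset.univ.filter (fun i => 0 ≤ lam i) with hS
  -- trace norm identity
  have htn : traceNorm (ρ - σ) = 2 * ∑ i ∈ S, lam i := by
    rw [traceNorm_herm hΔ]
    have h0 : ∑ i, lam i = 0 := by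
      simp_rw [key, Finset.sum_sub_distrib, hsumP, hsumQ, sub_self]
    have hsplit := Finset.sum_filter_add_sum_filter_not Finset.univ
      (fun i => 0 ≤ lam i) (fun i => |lam i|)
    have h1 : ∑ i ∈ S, |lam i| = ∑ i ∈ S, lam i :=
      Finset.sum_congr rfl fun i hi => abs_of_nonneg (Finset.mem_filter.mp hi).2
    have h2 : ∑ i ∈ Finset.univ.filter (fun i => ¬ 0 ≤ lam i), |lam i|
        = -∑ i ∈ Finset.univ.filter (fun i => ¬ 0 ≤ lam i), lam i := by
      rw [← Finset.sum_neg_distrib]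
      exact Finset.sum_congr rfl fun i hi =>
        abs_of_neg (lt_of_not_ge (Finset.mem_filter.mp hi).2)
    have hsplit2 := Finset.sum_filter_add_sum_filter_not Finset.univ
      (fun i => 0 ≤ lam i) lam
    rw [← hsplit, h1, h2]
    rw [hS]
    linarith [hsplit2, h0]
  -- the right-hand side equals the "overlap" sum
  have hrhs : 1 - traceNorm (ρ - σ) / 2
      = (∑ i ∈ Finset.univ.filter (fun i => ¬ 0 ≤ lam i), P i) + ∑ i ∈ S, Q i := by
    rw [htn]
    have hsplitP := Finset.sum_filter_add_sum_filter_not Finset.univ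
      (fun i => 0 ≤ lam i) P
    have : ∑ i ∈ S, lam i = ∑ i ∈ S, P i - ∑ i ∈ S, Q i := by
      simp_rw [key, Finset.sum_sub_distrib]
    rw [this]
    rw [← hsumP, ← hsplitP]
    ring
  rw [hrhs]
  set Sc : Finset 𝒴 := Finset.univ.filter (fun i => ¬ 0 ≤ lam i) with hSc
  set A : 𝒴 → 𝒴 → ℂ := fun y y' => ∑ i ∈ S, a y i * b y' i with hA
  set B : 𝒴 → 𝒴 → ℂ := fun y y' => ∑ i ∈ Sc, a y i * b y' i with hB
  have hsplit : ∀ y y', (inner ℂ (e y) (f y')) = A y y' + B y y' := by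
    intro y y'
    rw [hA, hB, hS, hSc]
    simp only []
    rw [Finset.sum_filter_add_sum_filter_not]
    simp only [ha, hb]
    exact (v.sum_inner_mul_inner (e y) (f y')).symm
  have hbessel_A : ∀ y', ∑ y, ‖A y y'‖ ^ 2 ≤ ∑ i ∈ S, ‖b y' i‖ ^ 2 := by
    intro y'
    set w : EuclideanSpace ℂ 𝒴 := ∑ i ∈ S, b y' i • v i with hw
    have h1 : ∀ y, A y y' = inner ℂ (e y) w := by
      intro y
      rw [hw, inner_sum]
      simp only [inner_smul_right, hA, ha, hb]
      exact Finset.sum_congr rfl fun i _ => mul_comm _ _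
    have h2 : ∑ y, ‖(inner ℂ (e y) w : ℂ)‖ ^ 2 ≤ ‖w‖ ^ 2 := he.sum_inner_products_le w
    have h3 : (‖w‖ ^ 2 : ℝ) = ∑ i ∈ S, ‖b y' i‖ ^ 2 := by
      have h4 := v.orthonormal.inner_sum (fun i => b y' i) (fun i => b y' i) S
      rw [← hw] at h4
      calc ‖w‖ ^ 2 = RCLike.re (inner (𝕜 := ℂ) w w) := (inner_self_eq_norm_sq w).symm
        _ = (∑ i ∈ S, (starRingEnd ℂ) (b y' i) * b y' i).re := by
            rw [RCLike.re_to_complex, h4]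
        _ = ∑ i ∈ S, ‖b y' i‖ ^ 2 := by
            rw [Complex.re_sum]
            refine Finset.sum_congr rfl fun i _ => ?_
            rw [mul_comm, Complex.mul_conj, Complex.normSq_eq_norm_sq,
              Complex.ofReal_re]
    calc ∑ y, ‖A y y'‖ ^ 2 = ∑ y, ‖(inner ℂ (e y) w : ℂ)‖ ^ 2 := by
          exact Finset.sum_congr rfl fun y _ => by rw [h1 y]
      _ ≤ ‖w‖ ^ 2 := h2
      _ = ∑ i ∈ S, ‖b y' i‖ ^ 2 := h3
  have hbessel_B : ∀ y, ∑ y', ‖B y y'‖ ^ 2 ≤ ∑ i ∈ Sc, ‖a y i‖ ^ 2 := by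
    intro y
    set u : EuclideanSpace ℂ 𝒴 := ∑ i ∈ Sc, (starRingEnd ℂ) (a y i) • v i with hu
    have h1 : ∀ y', B y y' = inner ℂ u (f y') := by
      intro y'
      rw [hu, sum_inner]
      simp only [inner_smul_left, hB, ha, hb, starRingEnd_self_apply]
    have h2 : ∑ y', ‖(inner ℂ u (f y') : ℂ)‖ ^ 2 ≤ ‖u‖ ^ 2 := by
      have h2' : ∑ y', ‖(inner (𝕜 := ℂ) (f y') u : ℂ)‖ ^ 2 ≤ ‖u‖ ^ 2 :=
        hf.sum_inner_products_le u
      refine le_trans (le_of_eq ?_) h2'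
      exact Finset.sum_congr rfl fun y' _ => by rw [norm_inner_symm]
    have h3 : (‖u‖ ^ 2 : ℝ) = ∑ i ∈ Sc, ‖a y i‖ ^ 2 := by
      have h4 := v.orthonormal.inner_sum (fun i => (starRingEnd ℂ) (a y i))
        (fun i => (starRingEnd ℂ) (a y i)) Sc
      rw [← hu] at h4
      simp only [starRingEnd_self_apply] at h4
      calc ‖u‖ ^ 2 = RCLike.re (inner (𝕜 := ℂ) u u) := (inner_self_eq_norm_sq u).symm
        _ = (∑ i ∈ Sc, a y i * (starRingEnd ℂ) (a y i)).re := by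
            rw [RCLike.re_to_complex, h4]
        _ = ∑ i ∈ Sc, ‖a y i‖ ^ 2 := by
            rw [Complex.re_sum]
            refine Finset.sum_congr rfl fun i _ => ?_
            rw [Complex.mul_conj, Complex.normSq_eq_norm_sq,
              Complex.ofReal_re]
    calc ∑ y', ‖B y y'‖ ^ 2 = ∑ y', ‖(inner ℂ u (f y') : ℂ)‖ ^ 2 := by
          exact Finset.sum_congr rfl fun y' _ => by rw [h1 y']
      _ ≤ ‖u‖ ^ 2 := h2
      _ = ∑ i ∈ Sc, ‖a y i‖ ^ 2 := h3
  have hpt : ∀ y y', min (p y) (q y') * ‖(inner (𝕜 := ℂ) (e y) (f y') : ℂ)‖ ^ 2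
      ≤ 2 * (q y' * ‖A y y'‖ ^ 2) + 2 * (p y * ‖B y y'‖ ^ 2) := by
    intro y y'
    have hc : ‖(inner (𝕜 := ℂ) (e y) (f y') : ℂ)‖ = ‖A y y' + B y y'‖ := by
      rw [← hsplit y y']
    have h4 : ‖A y y' + B y y'‖ ^ 2 ≤ 2 * ‖A y y'‖ ^ 2 + 2 * ‖B y y'‖ ^ 2 := by
      nlinarith [norm_add_le (A y y') (B y y'), norm_nonneg (A y y'), norm_nonneg (B y y'),
        sq_nonneg (‖A y y'‖ - ‖B y y'‖), norm_nonneg (A y y' + B y y')]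
    have hmin0 : 0 ≤ min (p y) (q y') := le_min (hp y) (hq y')
    calc min (p y) (q y') * ‖(inner (𝕜 := ℂ) (e y) (f y') : ℂ)‖ ^ 2
        = min (p y) (q y') * ‖A y y' + B y y'‖ ^ 2 := by rw [hc]
      _ ≤ min (p y) (q y') * (2 * ‖A y y'‖ ^ 2 + 2 * ‖B y y'‖ ^ 2) :=
          mul_le_mul_of_nonneg_left h4 hmin0
      _ ≤ 2 * (q y' * ‖A y y'‖ ^ 2) + 2 * (p y * ‖B y y'‖ ^ 2) := by
          have h5 : min (p y) (q y') ≤ q y' := min_le_right _ _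
          have h6 : min (p y) (q y') ≤ p y := min_le_left _ _
          nlinarith [sq_nonneg ‖A y y'‖, sq_nonneg ‖B y y'‖]
  have hT1 : ∑ y, ∑ y', q y' * ‖A y y'‖ ^ 2 ≤ ∑ i ∈ S, Q i := by
    rw [Finset.sum_comm]
    calc ∑ y', ∑ y, q y' * ‖A y y'‖ ^ 2 ≤ ∑ y', q y' * ∑ i ∈ S, ‖b y' i‖ ^ 2 := by
          refine Finset.sum_le_sum fun y' _ => ?_
          rw [← Finset.mul_sum]
          exact mul_le_mul_of_nonneg_left (hbessel_A y') (hq y')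
      _ = ∑ i ∈ S, Q i := by
          simp_rw [Finset.mul_sum]
          rw [Finset.sum_comm]
  have hT2 : ∑ y, ∑ y', p y * ‖B y y'‖ ^ 2 ≤ ∑ i ∈ Sc, P i := by
    calc ∑ y, ∑ y', p y * ‖B y y'‖ ^ 2 ≤ ∑ y, p y * ∑ i ∈ Sc, ‖a y i‖ ^ 2 := by
          refine Finset.sum_le_sum fun y _ => ?_
          rw [← Finset.mul_sum]
          exact mul_le_mul_of_nonneg_left (hbessel_B y) (hp y)
      _ = ∑ i ∈ Sc, P i := by
          simp_rw [Finset.mul_sum]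
          rw [Finset.sum_comm]
  have hmono : ∑ y, ∑ y', min (p y) (q y') * ‖(inner (𝕜 := ℂ) (e y) (f y') : ℂ)‖ ^ 2
      ≤ ∑ y, ∑ y', (2 * (q y' * ‖A y y'‖ ^ 2) + 2 * (p y * ‖B y y'‖ ^ 2)) :=
    Finset.sum_le_sum fun y _ => Finset.sum_le_sum fun y' _ => hpt y y'
  have hsplit2 : ∑ y, ∑ y', (2 * (q y' * ‖A y y'‖ ^ 2) + 2 * (p y * ‖B y y'‖ ^ 2))
      = 2 * (∑ y, ∑ y', q y' * ‖A y y'‖ ^ 2) + 2 * (∑ y, ∑ y', p y * ‖B y y'‖ ^ 2) := by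
    simp_rw [Finset.sum_add_distrib, Finset.mul_sum]
  linarith [hmono, hT1, hT2, hsplit2 ▸ hmono]
end
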